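/- Let A be a positive-definite n×n real matrix and let q be a vector in ℝⁿ with q ≥ 0 and q ≠ 0. Then sup over w ∈ ℝⁿ with w ≥ 0, w ≠ 0, of ⟨w,q⟩² / ⟨w, A w⟩ equals inf over v ∈ ℝⁿ with v ≥ q of ⟨v, A⁻¹ v⟩. -/

import Mathlib

open Matrix

variable {n : ℕ}

lemma sym_dot {B : Matrix (Fin n) (Fin n) ℝ} (hB : Bᵀ = B) (x y : Fin n → ℝ) :
    x ⬝ᵥ B.mulVec y = y ⬝ᵥ B.mulVec x := by
  rw [Matrix.dotProduct_mulVec, ← Matrix.mulVec_transpose, hB, dotProduct_comm]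

lemma quad_expand {B : Matrix (Fin n) (Fin n) ℝ} (hB : Bᵀ = B) (x y : Fin n → ℝ) (t : ℝ) :
    (x + t • y) ⬝ᵥ B.mulVec (x + t • y) =
      x ⬝ᵥ B.mulVec x + 2 * t * (y ⬝ᵥ B.mulVec x) + t ^ 2 * (y ⬝ᵥ B.mulVec y) := by
  have h := sym_dot hB x y
  simp only [mulVec_add, mulVec_smul, dotProduct_add, add_dotProduct, dotProduct_smul,
    smul_dotProduct, smul_eq_mul]
  rw [h]; ring

lemma posdef_pos {B : Matrix (Fin n) (Fin n) ℝ} (hB : B.PosDef) {x : Fin n → ℝ} (hx : x ≠ 0) :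
    0 < x ⬝ᵥ B.mulVec x := by
  simpa using hB.dotProduct_mulVec_pos hx

lemma quad_cont (B : Matrix (Fin n) (Fin n) ℝ) :
    Continuous fun v : Fin n → ℝ => v ⬝ᵥ B.mulVec v := by
  simp only [dotProduct, mulVec]
  fun_prop

lemma posdef_coercive {B : Matrix (Fin n) (Fin n) ℝ} (hB : B.PosDef) :
    ∃ c > (0:ℝ), ∀ v : Fin n → ℝ, c * ‖v‖ ^ 2 ≤ v ⬝ᵥ B.mulVec v := by
  rcases isEmpty_or_nonempty (Fin n) with he | hne
  · exact ⟨1, one_pos, fun v => by simp [dotProduct, Subsingleton.elim v 0]⟩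
  · have hsph : (Metric.sphere (0 : Fin n → ℝ) 1).Nonempty := by
      have : ∃ u : Fin n → ℝ, ‖u‖ = 1 := by
        obtain ⟨i⟩ := hne
        exact ⟨Pi.single i 1, by simp [Pi.norm_single]⟩
      obtain ⟨u, hu⟩ := this
      exact ⟨u, by simpa using hu⟩
    obtain ⟨u, hu, hmin⟩ := (isCompact_sphere (0 : Fin n → ℝ) 1).exists_isMinOn hsph
      (quad_cont B).continuousOn
    have hu1 : ‖u‖ = 1 := by simpa using hu
    have hu0 : u ≠ 0 := by intro h; simp [h] at hu1
    refine ⟨u ⬝ᵥ B.mulVec u, posdef_pos hB hu0, fun v => ?_⟩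
    rcases eq_or_ne v 0 with rfl | hv
    · simp
    · have hnv : (0:ℝ) < ‖v‖ := norm_pos_iff.mpr hv
      have hmem : (‖v‖⁻¹ • v) ∈ Metric.sphere (0 : Fin n → ℝ) 1 := by
        simp [norm_smul, abs_of_pos (inv_pos.mpr hnv), inv_mul_cancel₀ hnv.ne']
      have h1 : u ⬝ᵥ B.mulVec u ≤ (‖v‖⁻¹ • v) ⬝ᵥ B.mulVec (‖v‖⁻¹ • v) := hmin hmem
      have hexp : (‖v‖⁻¹ • v) ⬝ᵥ B.mulVec (‖v‖⁻¹ • v) = ‖v‖⁻¹ ^ 2 * (v ⬝ᵥ B.mulVec v) := by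
        simp [mulVec_smul, smul_dotProduct, dotProduct_smul, smul_eq_mul]; ring
      rw [hexp] at h1
      have := mul_le_mul_of_nonneg_left h1 (le_of_lt (pow_pos hnv 2))
      calc u ⬝ᵥ B.mulVec u * ‖v‖ ^ 2 = ‖v‖ ^ 2 * (u ⬝ᵥ B.mulVec u) := by ring
        _ ≤ ‖v‖ ^ 2 * (‖v‖⁻¹ ^ 2 * (v ⬝ᵥ B.mulVec v)) := this
        _ = v ⬝ᵥ B.mulVec v := by field_simp

lemma exists_min {B : Matrix (Fin n) (Fin n) ℝ} (hB : B.PosDef) (q : Fin n → ℝ) :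
    ∃ v : Fin n → ℝ, q ≤ v ∧ ∀ u : Fin n → ℝ, q ≤ u →
      v ⬝ᵥ B.mulVec v ≤ u ⬝ᵥ B.mulVec u := by
  obtain ⟨c, hc, hcoer⟩ := posdef_coercive hB
  set f : (Fin n → ℝ) → ℝ := fun v => v ⬝ᵥ B.mulVec v with hf
  set K : Set (Fin n → ℝ) := {v | q ≤ v ∧ f v ≤ f q} with hK
  have hKne : K.Nonempty := ⟨q, le_refl q, le_refl _⟩
  have hKclosed : IsClosed K := by
    have h1 : IsClosed {v : Fin n → ℝ | q ≤ v} := isClosed_Ici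
    have h2 : IsClosed {v : Fin n → ℝ | f v ≤ f q} :=
      isClosed_le (quad_cont B) continuous_const
    exact h1.inter h2
  have hKbdd : Bornology.IsBounded K := by
    rw [Metric.isBounded_iff_subset_closedBall 0]
    refine ⟨Real.sqrt (f q / c), fun v hv => ?_⟩
    have h1 : c * ‖v‖ ^ 2 ≤ f q := le_trans (hcoer v) hv.2
    have h2 : ‖v‖ ^ 2 ≤ f q / c := (le_div_iff₀' hc).mpr h1
    have h3 : ‖v‖ ≤ Real.sqrt (f q / c) := by
      have h4 := Real.sq_sqrt ((sq_nonneg ‖v‖).trans h2)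
      nlinarith [Real.sqrt_nonneg (f q / c), norm_nonneg v]
    simpa [Metric.mem_closedBall] using h3
  have hKcompact : IsCompact K := Metric.isCompact_of_isClosed_isBounded hKclosed hKbdd
  obtain ⟨v, hvK, hmin⟩ := hKcompact.exists_isMinOn hKne (quad_cont B).continuousOn
  refine ⟨v, hvK.1, fun u hu => ?_⟩
  by_cases h : f u ≤ f q
  · exact hmin ⟨hu, h⟩
  · have hvq : f v ≤ f q := hmin ⟨le_refl q, le_refl _⟩
    exact hvq.trans (le_of_not_ge h)

lemma posdef_nonneg {B : Matrix (Fin n) (Fin n) ℝ} (hB : B.PosDef) (x : Fin n → ℝ) :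
    0 ≤ x ⬝ᵥ B.mulVec x := by
  rcases eq_or_ne x 0 with rfl | hx
  · simp
  · exact (posdef_pos hB hx).le

lemma hermit_symm {B : Matrix (Fin n) (Fin n) ℝ} (hB : B.IsHermitian) : Bᵀ = B := by
  ext i j
  exact congrFun (congrFun hB i) j

lemma dot_mono {w a b : Fin n → ℝ} (hw : 0 ≤ w) (hab : a ≤ b) : w ⬝ᵥ a ≤ w ⬝ᵥ b :=
  Finset.sum_le_sum fun i _ => mul_le_mul_of_nonneg_left (hab i) (hw i)

lemma weak_duality {A : Matrix (Fin n) (Fin n) ℝ} (hA : A.PosDef)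
    (hInv : ∀ u : Fin n → ℝ, A.mulVec (A⁻¹.mulVec u) = u)
    {w v q : Fin n → ℝ} (hw : 0 ≤ w) (hw0 : w ≠ 0) (hq : 0 ≤ q) (hv : q ≤ v) :
    (w ⬝ᵥ q) ^ 2 / (w ⬝ᵥ A.mulVec w) ≤ v ⬝ᵥ A⁻¹.mulVec v := by
  have hAsym : Aᵀ = A := hermit_symm hA.1
  set α := w ⬝ᵥ A.mulVec w with hαdef
  have hα : 0 < α := posdef_pos hA hw0
  set s := w ⬝ᵥ q with hsdef
  have hs : 0 ≤ s := Finset.sum_nonneg fun i _ => mul_nonneg (hw i) (hq i)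
  have hwv : s ≤ w ⬝ᵥ v := dot_mono hw hv
  set x := A⁻¹.mulVec v with hxdef
  set t : ℝ := -(s / α) with htdef
  clear_value t
  have key0 : 0 ≤ (x + t • w) ⬝ᵥ A.mulVec (x + t • w) := posdef_nonneg hA _
  rw [quad_expand hAsym x w t] at key0
  have hxAx : x ⬝ᵥ A.mulVec x = v ⬝ᵥ A⁻¹.mulVec v := by
    rw [hxdef, hInv v, dotProduct_comm]
  have hwAx : w ⬝ᵥ A.mulVec x = w ⬝ᵥ v := by rw [hxdef, hInv v]
  rw [hwAx, hxAx] at key0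
  have htα : t * α = -s := by rw [htdef]; field_simp
  rw [div_le_iff₀ hα]
  have key2 : 0 ≤ (v ⬝ᵥ A⁻¹.mulVec v) * α - 2 * s * (w ⬝ᵥ v) + s ^ 2 := by
    have h := mul_le_mul_of_nonneg_left key0 hα.le
    have e1 : 2 * (t * α) * (w ⬝ᵥ v) = -2 * s * (w ⬝ᵥ v) := by rw [htα]; ring
    have e2 : (t * α) * (t * α) = s ^ 2 := by rw [htα]; ring
    nlinarith [h, e1, e2]
  have h2 : 2 * s * s ≤ 2 * s * (w ⬝ᵥ v) :=
    mul_le_mul_of_nonneg_left hwv (by positivity)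
  nlinarith

lemma kkt {B : Matrix (Fin n) (Fin n) ℝ} (hB : B.PosDef) {q v : Fin n → ℝ}
    (hv : q ≤ v) (hmin : ∀ u : Fin n → ℝ, q ≤ u →
      v ⬝ᵥ B.mulVec v ≤ u ⬝ᵥ B.mulVec u) :
    0 ≤ B.mulVec v ∧ ∀ i, q i < v i → B.mulVec v i = 0 := by
  classical
  have hBsym : Bᵀ = B := hermit_symm hB.1
  set w := B.mulVec v with hw
  have hstep : ∀ (i : Fin n) (t : ℝ), q ≤ v + t • (Pi.single i 1 : Fin n → ℝ) →
      0 ≤ 2 * t * w i + t ^ 2 * (Pi.single i 1 ⬝ᵥ B.mulVec (Pi.single i (1:ℝ))) := by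
    intro i t ht
    have h := hmin _ ht
    rw [quad_expand hBsym v (Pi.single i 1) t] at h
    have hcross : Pi.single i (1:ℝ) ⬝ᵥ B.mulVec v = w i := by
      rw [← hw, single_dotProduct, one_mul]
    rw [hcross] at h
    linarith
  have hd : ∀ i : Fin n, 0 ≤ Pi.single i (1:ℝ) ⬝ᵥ B.mulVec (Pi.single i (1:ℝ)) :=
    fun i => posdef_nonneg hB _
  have hwpos : ∀ i, 0 ≤ w i := by
    intro i
    by_contra hneg
    push_neg at hneg
    set d := Pi.single i (1:ℝ) ⬝ᵥ B.mulVec (Pi.single i (1:ℝ)) with hddef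
    have hd1 : (0:ℝ) < d + 1 := by linarith [hd i]
    set t : ℝ := -(w i) / (d + 1) with htdef
    clear_value t
    have ht0 : 0 < t := by rw [htdef]; exact div_pos (by linarith) hd1
    have hfeas : q ≤ v + t • (Pi.single i 1 : Fin n → ℝ) := by
      intro j
      have : (0:ℝ) ≤ t * (Pi.single i 1 : Fin n → ℝ) j := by
        apply mul_nonneg ht0.le
        rcases eq_or_ne j i with rfl | hji
        · simp
        · simp [Pi.single_apply, hji]
      simpa using le_trans (hv j) (by simp; linarith)
    have hk := hstep i t hfeas
    have ht1 : t * (d + 1) = -(w i) := by rw [htdef]; field_simp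
    nlinarith [mul_pos ht0 ht0, mul_pos ht0 hd1]
  refine ⟨hwpos, fun i hqi => ?_⟩
  by_contra hne
  have hwipos : 0 < w i := lt_of_le_of_ne (hwpos i) (Ne.symm hne)
  set d := Pi.single i (1:ℝ) ⬝ᵥ B.mulVec (Pi.single i (1:ℝ)) with hddef
  have hd1 : (0:ℝ) < d + 1 := by linarith [hd i]
  set m : ℝ := min ((v i - q i) / 2) (w i / (d + 1)) with hmdef
  have hm0 : 0 < m := lt_min (by linarith) (by positivity)
  have hma : m ≤ (v i - q i) / 2 := min_le_left _ _
  have hmb : m * (d + 1) ≤ w i := by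
    have := min_le_right ((v i - q i) / 2) (w i / (d + 1))
    calc m * (d + 1) ≤ (w i / (d + 1)) * (d + 1) :=
          mul_le_mul_of_nonneg_right this hd1.le
      _ = w i := by field_simp
  clear_value m
  have hfeas : q ≤ v + (-m) • (Pi.single i 1 : Fin n → ℝ) := by
    intro j
    rcases eq_or_ne j i with rfl | hji
    · simp only [Pi.add_apply, Pi.smul_apply, Pi.single_eq_same, smul_eq_mul, mul_one]
      linarith
    · simp [Pi.single_apply, hji, hv j]
  have hk := hstep i (-m) hfeas
  nlinarith [mul_le_mul_of_nonneg_left hmb hm0.le, mul_pos hm0 hwipos, mul_pos hm0 hm0]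

theorem saddle_point_equality (n : ℕ) (A : Matrix (Fin n) (Fin n) ℝ)
    (hA : A.PosDef) (q : Fin n → ℝ) (hq : 0 ≤ q) (hq0 : q ≠ 0) :
    sSup {r : ℝ | ∃ w : Fin n → ℝ, 0 ≤ w ∧ w ≠ 0 ∧
        r = (w ⬝ᵥ q) ^ 2 / (w ⬝ᵥ A.mulVec w)} =
    sInf {r : ℝ | ∃ v : Fin n → ℝ, q ≤ v ∧ r = v ⬝ᵥ A⁻¹.mulVec v} := by
  classical
  have hB : A⁻¹.PosDef := hA.inv
  have hdet : IsUnit A.det := isUnit_iff_ne_zero.mpr (ne_of_gt hA.det_pos)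
  have hInv : ∀ u : Fin n → ℝ, A.mulVec (A⁻¹.mulVec u) = u := fun u => by
    rw [mulVec_mulVec, Matrix.mul_nonsing_inv A hdet, one_mulVec]
  obtain ⟨v, hvq, hmin⟩ := exists_min hB q
  obtain ⟨hwpos, hcs⟩ := kkt hB hvq hmin
  set w := A⁻¹.mulVec v with hwdef
  set m := v ⬝ᵥ A⁻¹.mulVec v with hmdef
  have hv0 : v ≠ 0 := by
    obtain ⟨i, hi⟩ := Function.ne_iff.mp hq0
    have hqi : 0 < q i := lt_of_le_of_ne (hq i) (Ne.symm (by simpa using hi))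
    intro h
    have := hvq i
    rw [h] at this
    simp only [Pi.zero_apply] at this
    linarith
  have hw0 : w ≠ 0 := by
    intro h
    apply hv0
    rw [← hInv v, ← hwdef, h, mulVec_zero]
  have hwq : w ⬝ᵥ q = w ⬝ᵥ v := by
    refine Finset.sum_congr rfl fun i _ => ?_
    rcases eq_or_lt_of_le (hvq i) with h | h
    · rw [h]
    · rw [hcs i h]; ring
  have hwv : w ⬝ᵥ v = m := by rw [hmdef, dotProduct_comm]
  have hAw : A.mulVec w = v := hInv v
  have hwAw : w ⬝ᵥ A.mulVec w = m := by rw [hAw, hwv]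
  have hm_pos : 0 < m := posdef_pos hB hv0
  have hmS : m ∈ {r : ℝ | ∃ w : Fin n → ℝ, 0 ≤ w ∧ w ≠ 0 ∧
      r = (w ⬝ᵥ q) ^ 2 / (w ⬝ᵥ A.mulVec w)} := by
    refine ⟨w, hwpos, hw0, ?_⟩
    rw [hwq, hwv, hwAw, sq, mul_div_assoc, div_self hm_pos.ne', mul_one]
  have hmT : m ∈ {r : ℝ | ∃ v : Fin n → ℝ, q ≤ v ∧ r = v ⬝ᵥ A⁻¹.mulVec v} := ⟨v, hvq, rfl⟩
  have hSub : ∀ r ∈ {r : ℝ | ∃ w : Fin n → ℝ, 0 ≤ w ∧ w ≠ 0 ∧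
      r = (w ⬝ᵥ q) ^ 2 / (w ⬝ᵥ A.mulVec w)}, r ≤ m := by
    rintro r ⟨w', hw', hw0', rfl⟩
    exact weak_duality hA hInv hw' hw0' hq hvq
  have hTlb : ∀ r ∈ {r : ℝ | ∃ v : Fin n → ℝ, q ≤ v ∧ r = v ⬝ᵥ A⁻¹.mulVec v}, m ≤ r := by
    rintro r ⟨u, hu, rfl⟩
    exact hmin u hu
  rw [le_antisymm (csSup_le ⟨m, hmS⟩ hSub) (le_csSup ⟨m, hSub⟩ hmS),
    le_antisymm (csInf_le ⟨m, hTlb⟩ hmT) (le_csInf ⟨m, hmT⟩ hTlb)]
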